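/- arXiv:2310.04695 — 4 statements merged into one kernel-verified Lean document; each statement's English description precedes it below -/
import Mathlib

section
/- In L(p,q) with the partial order x ≤ y iff y − x ∈ ℕx₁ + ℕx₂, for x = l₁x₁ + l₂x₂ + lc in normal form one has 0 ≤ x if and only if l ≥ 0. -/
/-- The abelian group `L(p,q)` on generators `x₁, x₂` subject to `p·x₁ = q·x₂`. -/
abbrev Lpq (p q : ℕ) : Type := (ℤ × ℤ) ⧸ AddSubgroup.closure {((p : ℤ), -(q : ℤ))}

def Lx1 (p q : ℕ) : Lpq p q := QuotientAddGroup.mk (1, 0)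

def Lx2 (p q : ℕ) : Lpq p q := QuotientAddGroup.mk (0, 1)

def Lc (p q : ℕ) : Lpq p q := (p : ℤ) • Lx1 p q

lemma key_smul (p q : ℕ) (a b : ℤ) :
    a • Lx1 p q + b • Lx2 p q = (QuotientAddGroup.mk (a, b) : Lpq p q) := by
  have h1 : Lx1 p q = QuotientAddGroup.mk' _ (1, 0) := rfl
  have h2 : Lx2 p q = QuotientAddGroup.mk' _ (0, 1) := rfl
  have h3 : (QuotientAddGroup.mk ((a, b) : ℤ × ℤ) : Lpq p q)
      = QuotientAddGroup.mk' _ (a, b) := rfl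
  rw [h1, h2, h3, ← map_zsmul, ← map_zsmul, ← map_add]
  congr 1
  simp [Prod.ext_iff]

/-- For `x = l₁x₁ + l₂x₂ + lc` in normal form, `0 ≤ x` in the partial order on `L(p,q)`
(i.e. `x ∈ ℕx₁ + ℕx₂`) if and only if `l ≥ 0`. -/
theorem nonneg_iff_l_nonneg (p q : ℕ) (hp : 1 ≤ p) (hq : 1 ≤ q)
    (l₁ l₂ l : ℤ) (hl₁ : 0 ≤ l₁ ∧ l₁ ≤ (p : ℤ) - 1) (hl₂ : 0 ≤ l₂ ∧ l₂ ≤ (q : ℤ) - 1)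
    (x : Lpq p q) (hx : x = l₁ • Lx1 p q + l₂ • Lx2 p q + l • Lc p q) :
    (∃ a b : ℕ, x = (a : ℤ) • Lx1 p q + (b : ℤ) • Lx2 p q) ↔ 0 ≤ l := by
  obtain ⟨hl₁0, hl₁p⟩ := hl₁
  obtain ⟨hl₂0, hl₂q⟩ := hl₂
  have hp' : (0 : ℤ) < p := by exact_mod_cast hp
  have hq' : (0 : ℤ) < q := by exact_mod_cast hq
  have hx' : x = (QuotientAddGroup.mk (l₁ + l * p, l₂) : Lpq p q) := by
    rw [hx]
    unfold Lc
    rw [smul_smul, add_right_comm, ← add_zsmul, key_smul]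
  constructor
  · rintro ⟨a, b, hab⟩
    rw [hx', key_smul] at hab
    rw [QuotientAddGroup.eq] at hab
    rw [AddSubgroup.mem_closure_singleton] at hab
    obtain ⟨k, hk⟩ := hab
    have h1 : k * p = -(l₁ + l * p) + a := congrArg Prod.fst hk
    have h2 : k * -q = -l₂ + b := congrArg Prod.snd hk
    have ha : (0 : ℤ) ≤ a := Int.natCast_nonneg a
    have hb : (0 : ℤ) ≤ b := Int.natCast_nonneg b
    -- from h2 : -k*q = b - l₂ ≥ -l₂ ≥ -(q-1), so k ≤ 0
    have hk0 : k ≤ 0 := by nlinarith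
    -- (l + ? ) careful: a = l₁ + (l + k)*p ≥ 0, l₁ ≤ p - 1 ⇒ l + k ≥ 0 ⇒ l ≥ -k ≥ 0
    have hlk : 0 ≤ l + k := by nlinarith
    linarith
  · intro hl
    have hnn : (0 : ℤ) ≤ l₁ + l * p := by nlinarith
    refine ⟨(l₁ + l * p).toNat, l₂.toNat, ?_⟩
    rw [key_smul, Int.toNat_of_nonneg hnn, Int.toNat_of_nonneg hl₂0, hx']
end

section
/- The graph Λ_{(p,q)} is connected: any two vertices (c₁,…,c_p) and (d₁,…,d_p) with c₁ ≤ ⋯ ≤ c_p ≤ c₁+q and d₁ ≤ ⋯ ≤ d_p ≤ d₁+q are joined by a path of edges, each edge changing exactly one coordinate by ±1 while staying in the vertex set. -/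
/-!
Lowering by one the first coordinate that exceeds `c₁` keeps a tuple in `Λ⁰_{(p,q)}` and
decreases `∑ᵢ (cᵢ - c₁)`, so every vertex is joined to a constant tuple. The constant tuples
`(a,…,a)` and `(a+1,…,a+1)` are joined by the staircase raising one coordinate at a time,
starting from the last; its vertices have spread `1 ≤ q`.
-/

/-- The vertex set `Λ⁰_{(p,q)} = {(c₁,…,c_p) ∈ ℤ^p : c₁ ≤ ⋯ ≤ c_p ≤ c₁ + q}`
(written index-free: monotone and any two entries differ by at most `q`). -/
def Lam0 (p q : ℕ) : Set (Fin p → ℤ) :=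
  {c | (∀ i j : Fin p, i ≤ j → c i ≤ c j) ∧ ∀ i j : Fin p, c i ≤ c j + q}

/-- The graph `Λ_{(p,q)}`: vertices `Λ⁰_{(p,q)}`, edges between tuples at ℓ¹-distance 1. -/
def LamGraph (p q : ℕ) : SimpleGraph (Lam0 p q) where
  Adj u v := ∑ i, ((u : Fin p → ℤ) i - (v : Fin p → ℤ) i).natAbs = 1
  symm := by
    refine ⟨fun u v h => ?_⟩
    have e : ∀ i, ((v : Fin p → ℤ) i - (u : Fin p → ℤ) i).natAbs
        = ((u : Fin p → ℤ) i - (v : Fin p → ℤ) i).natAbs := fun i => by rw [← Int.natAbs_neg, neg_sub]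
    simpa [e] using h
  loopless := ⟨fun u h => by simp at h⟩

theorem SimpleGraph.exists_reachable_of_forall_exists_adj_lt {V : Type*} (G : SimpleGraph V)
    (f : V → ℕ) {P : V → Prop} (h : ∀ u, ¬ P u → ∃ v, G.Adj u v ∧ f v < f u) (u : V) :
    ∃ v, G.Reachable u v ∧ P v := by
  induction hu : f u using Nat.strong_induction_on generalizing u with
  | _ n ih =>
    by_cases hPu : P u
    · exact ⟨u, .rfl, hPu⟩
    obtain ⟨v, huv, hvu⟩ := h u hPu
    obtain ⟨w, hvw, hPw⟩ := ih (f v) (hu ▸ hvu) v rfl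
    exact ⟨w, huv.reachable.trans hvw, hPw⟩

namespace Lam0

variable {p q : ℕ}

def const (p q : ℕ) (a : ℤ) : Lam0 p q :=
  ⟨fun _ => a, fun _ _ _ => le_rfl, fun _ _ => by simp⟩

theorem update_sub_one_mem {c : Fin p → ℤ} (hc : c ∈ Lam0 p q) {j z : Fin p}
    (hzj : c z < c j) (hlt : ∀ i < j, c i < c j) :
    Function.update c j (c j - 1) ∈ Lam0 p q := by
  have hle : ∀ i, Function.update c j (c j - 1) i ≤ c i := fun i => by
    rcases eq_or_ne i j with rfl | hi <;> simp [*]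
  refine ⟨fun i k hik => ?_, fun i k => ?_⟩
  · rcases eq_or_ne k j with rfl | hk
    · rcases eq_or_ne i k with rfl | hi
      · exact le_rfl
      · simpa [hi] using Int.le_sub_one_of_lt (hlt i (lt_of_le_of_ne hik hi))
    · simpa [hk] using (hle i).trans (hc.1 i k hik)
  · rcases eq_or_ne k j with rfl | hk
    · have := hc.2 i z
      simp only [Function.update_self]
      linarith [hle i]
    · simpa [hk] using (hle i).trans (hc.2 i k)

theorem stair_mem (hq : 1 ≤ q) (a : ℤ) (k : ℕ) :
    (fun i : Fin p => if (i : ℕ) < k then a else a + 1) ∈ Lam0 p q := by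
  have hq' : (1 : ℤ) ≤ q := by exact_mod_cast hq
  refine ⟨fun i j (hij : (i : ℕ) ≤ j) => ?_, fun i j => ?_⟩ <;> dsimp only <;> split_ifs <;> omega

end Lam0

namespace LamGraph

open Lam0

variable {p q : ℕ}

theorem adj_of_eq_update {u v : Lam0 p q} {j : Fin p}
    (h : (v : Fin p → ℤ) = Function.update u j (u.1 j + 1)) : (LamGraph p q).Adj u v := by
  show ∑ i, (u.1 i - v.1 i).natAbs = 1
  rw [Finset.sum_eq_single j (fun i _ hi => by simp [h, hi]) (by simp)]
  simp [h]

theorem exists_adj_sum_lt [NeZero p] (u : Lam0 p q) (hu : ∃ i, u.1 0 < u.1 i) :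
    ∃ v : Lam0 p q, (LamGraph p q).Adj u v ∧
      ∑ i, (v.1 i - v.1 0).toNat < ∑ i, (u.1 i - u.1 0).toNat := by
  obtain ⟨j, hj, hjmin⟩ := wellFounded_lt.has_min {i | u.1 0 < u.1 i} hu
  have hlt : ∀ i < j, u.1 i < u.1 j := fun i hij =>
    (not_lt.1 fun hi => hjmin i hi hij).trans_lt hj
  have hj0 : (0 : Fin p) ≠ j := by rintro rfl; exact lt_irrefl (u.1 0) hj
  let v : Lam0 p q := ⟨_, update_sub_one_mem u.2 hj hlt⟩
  have hv0 : v.1 0 = u.1 0 := Function.update_of_ne hj0 _ _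
  refine ⟨v, (adj_of_eq_update (j := j) ?_).symm, ?_⟩
  · simp [v]
  · rw [hv0]
    refine Finset.sum_lt_sum (fun i _ => ?_) ⟨j, Finset.mem_univ _, ?_⟩
    · rcases eq_or_ne i j with rfl | hi <;> simp [v, *]
    · simp only [v, Function.update_self]
      simp only [Set.mem_ofPred_eq] at hj
      omega

theorem exists_reachable_const [NeZero p] (u : Lam0 p q) :
    ∃ a, (LamGraph p q).Reachable u (const p q a) := by
  obtain ⟨v, huv, hv⟩ := (LamGraph p q).exists_reachable_of_forall_exists_adj_lt
    (fun v => ∑ i, (v.1 i - v.1 0).toNat) (P := fun v => ∀ i, v.1 i = v.1 0)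
    (fun v hv => exists_adj_sum_lt v <| by
      push Not at hv
      obtain ⟨i, hi⟩ := hv
      exact ⟨i, lt_of_le_of_ne (v.2.1 0 i (Fin.zero_le i)) (Ne.symm hi)⟩) u
  exact ⟨v.1 0, (Subtype.ext (funext hv) : v = const p q (v.1 0)) ▸ huv⟩

theorem reachable_const_add_one (hq : 1 ≤ q) (a : ℤ) :
    (LamGraph p q).Reachable (const p q a) (const p q (a + 1)) := by
  let stair (k : ℕ) : Lam0 p q := ⟨_, stair_mem hq a k⟩
  have hstep : ∀ k ≤ p, (LamGraph p q).Reachable (stair k) (stair 0) := by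
    intro k hk
    induction k with
    | zero => rfl
    | succ k ih =>
      refine (adj_of_eq_update (j := ⟨k, hk⟩) ?_).reachable.trans (ih (by omega))
      funext i
      rcases eq_or_ne i ⟨k, hk⟩ with rfl | hi
      · simp [stair]
      · have : (i : ℕ) ≠ k := fun h => hi (Fin.ext h)
        simp only [stair, Function.update_of_ne hi]
        split_ifs <;> omega
  convert hstep p le_rfl using 1 <;> ext i <;> simp [stair, const]

theorem reachable_const (hq : 1 ≤ q) (a b : ℤ) :
    (LamGraph p q).Reachable (const p q a) (const p q b) := by
  suffices h : ∀ b, (LamGraph p q).Reachable (const p q 0) (const p q b) from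
    (h a).symm.trans (h b)
  intro b
  induction b using Int.induction_on with
  | zero => rfl
  | succ b ih => exact ih.trans (reachable_const_add_one hq _)
  | pred b ih => exact ih.trans (by simpa using (reachable_const_add_one hq (-b - 1)).symm)

end LamGraph

theorem lamGraph_connected_general (p q : ℕ) (hq : 1 ≤ q) (u v : Lam0 p q) :
    (LamGraph p q).Reachable u v := by
  obtain rfl | hp := p.eq_zero_or_pos
  · rw [Subsingleton.elim u v]
  have : NeZero p := ⟨hp.ne'⟩
  obtain ⟨a, hua⟩ := LamGraph.exists_reachable_const u
  obtain ⟨b, hvb⟩ := LamGraph.exists_reachable_const v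
  exact hua.trans ((LamGraph.reachable_const hq a b).trans hvb.symm)

/-- the graph `Λ_{(p,q)}` is connected: any two vertices are joined by a
path of edges (each edge changing one coordinate by `±1`, staying in the vertex set). -/
theorem lamGraph_connected (p q : ℕ) (hp : 1 ≤ p) (hq : 1 ≤ q) (u v : Lam0 p q) :
    (LamGraph p q).Reachable u v :=
  lamGraph_connected_general p q hq u v
end

section
/- For line bundles O(x) and O(y) on the weighted projective line X(p,q), where x = l₁x₁+l₂x₂+lc and y = k₁x₁+k₂x₂+kc in normal form, write h₁ = l₁−k₁−1 and h₂ = l₂−k₂−1. Then dim_k Ext¹(O(x),O(y)) equals: l−k+1 if 0 ≤ h₁ ≤ p−2, 0 ≤ h₂ ≤ q−2 and k ≤ l; l−k if exactly one of h₁, h₂ is negative (i.e., −p ≤ h₁ ≤ −1, 0 ≤ h₂ ≤ q−2, k ≤ l, or 0 ≤ h₁ ≤ p−2, −q ≤ h₂ ≤ −1, k ≤ l); l−k−1 if −p ≤ h₁ ≤ −1, −q ≤ h₂ ≤ −1 and k+1 ≤ l; and 0 otherwise. -/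
/-- `dim_k Ext¹(O(x), O(y))` for `x = l₁x₁+l₂x₂+lc`, `y = k₁x₁+k₂x₂+kc` in normal form.
By Serre duality `Ext¹(O(x),O(y)) ≅ S(p,q)_{x−x₁−x₂−y}`, and for `z = m₁x₁+m₂x₂+mc` in
normal form `dim S(p,q)_z = m+1` if `m ≥ 0` and `0` otherwise; bringing
`(l₁−k₁−1)x₁ + (l₂−k₂−1)x₂ + (l−k)c` into normal form replaces the two leading
coefficients by their residues mod `p`, `q`, contributing the floor quotients to `m`. -/
def extDim (p q : ℕ) (l₁ l₂ l k₁ k₂ k : ℤ) : ℤ :=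
  if 0 ≤ (l - k) + Int.fdiv (l₁ - k₁ - 1) p + Int.fdiv (l₂ - k₂ - 1) q then
    (l - k) + Int.fdiv (l₁ - k₁ - 1) p + Int.fdiv (l₂ - k₂ - 1) q + 1
  else 0

lemma fdiv_zero_of_bounds {p h : ℤ} (h0 : 0 ≤ h) (h1 : h < p) : Int.fdiv h p = 0 := by
  rw [Int.fdiv_eq_ediv_of_nonneg _ (by omega)]
  exact Int.ediv_eq_zero_of_lt h0 h1

lemma fdiv_neg_one_of_bounds {p h : ℤ} (h0 : -p ≤ h) (h1 : h < 0) : Int.fdiv h p = -1 := by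
  have hp : 0 < p := by omega
  rw [Int.fdiv_eq_ediv_of_nonneg _ (by omega)]
  have : h = (h + p) + (-1) * p := by ring
  rw [this, Int.add_mul_ediv_right _ _ (by omega)]
  rw [Int.ediv_eq_zero_of_lt (by omega) (by omega)]
  omega

/-- the case formula for `dim_k Ext¹(O(x),O(y))` in terms of
`h₁ = l₁−k₁−1`, `h₂ = l₂−k₂−1`. -/
theorem extDim_cases (p q : ℕ) (hp : 1 ≤ p) (hq : 1 ≤ q)
    (l₁ l₂ l k₁ k₂ k : ℤ)
    (hl₁ : 0 ≤ l₁ ∧ l₁ ≤ (p : ℤ) - 1) (hk₁ : 0 ≤ k₁ ∧ k₁ ≤ (p : ℤ) - 1)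
    (hl₂ : 0 ≤ l₂ ∧ l₂ ≤ (q : ℤ) - 1) (hk₂ : 0 ≤ k₂ ∧ k₂ ≤ (q : ℤ) - 1) :
    ((0 ≤ l₁ - k₁ - 1 ∧ l₁ - k₁ - 1 ≤ (p : ℤ) - 2 ∧
        0 ≤ l₂ - k₂ - 1 ∧ l₂ - k₂ - 1 ≤ (q : ℤ) - 2 ∧ k ≤ l →
      extDim p q l₁ l₂ l k₁ k₂ k = l - k + 1) ∧
    ((-(p : ℤ) ≤ l₁ - k₁ - 1 ∧ l₁ - k₁ - 1 ≤ -1 ∧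
        0 ≤ l₂ - k₂ - 1 ∧ l₂ - k₂ - 1 ≤ (q : ℤ) - 2 ∧ k ≤ l) ∨
     (0 ≤ l₁ - k₁ - 1 ∧ l₁ - k₁ - 1 ≤ (p : ℤ) - 2 ∧
        -(q : ℤ) ≤ l₂ - k₂ - 1 ∧ l₂ - k₂ - 1 ≤ -1 ∧ k ≤ l) →
      extDim p q l₁ l₂ l k₁ k₂ k = l - k) ∧
    (-(p : ℤ) ≤ l₁ - k₁ - 1 ∧ l₁ - k₁ - 1 ≤ -1 ∧
        -(q : ℤ) ≤ l₂ - k₂ - 1 ∧ l₂ - k₂ - 1 ≤ -1 ∧ k + 1 ≤ l →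
      extDim p q l₁ l₂ l k₁ k₂ k = l - k - 1) ∧
    (¬((0 ≤ l₁ - k₁ - 1 ∧ l₁ - k₁ - 1 ≤ (p : ℤ) - 2 ∧
          0 ≤ l₂ - k₂ - 1 ∧ l₂ - k₂ - 1 ≤ (q : ℤ) - 2 ∧ k ≤ l) ∨
        (-(p : ℤ) ≤ l₁ - k₁ - 1 ∧ l₁ - k₁ - 1 ≤ -1 ∧
          0 ≤ l₂ - k₂ - 1 ∧ l₂ - k₂ - 1 ≤ (q : ℤ) - 2 ∧ k ≤ l) ∨
        (0 ≤ l₁ - k₁ - 1 ∧ l₁ - k₁ - 1 ≤ (p : ℤ) - 2 ∧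
          -(q : ℤ) ≤ l₂ - k₂ - 1 ∧ l₂ - k₂ - 1 ≤ -1 ∧ k ≤ l) ∨
        (-(p : ℤ) ≤ l₁ - k₁ - 1 ∧ l₁ - k₁ - 1 ≤ -1 ∧
          -(q : ℤ) ≤ l₂ - k₂ - 1 ∧ l₂ - k₂ - 1 ≤ -1 ∧ k + 1 ≤ l)) →
      extDim p q l₁ l₂ l k₁ k₂ k = 0)) := by
  
  set h₁ := l₁ - k₁ - 1 with hh1
  set h₂ := l₂ - k₂ - 1 with hh2
  have d1 : Int.fdiv h₁ p = 0 ∨ Int.fdiv h₁ p = -1 := by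
    rcases le_or_gt 0 h₁ with h | h
    · exact Or.inl (fdiv_zero_of_bounds h (by omega))
    · exact Or.inr (fdiv_neg_one_of_bounds (by omega) h)
  have d2 : Int.fdiv h₂ q = 0 ∨ Int.fdiv h₂ q = -1 := by
    rcases le_or_gt 0 h₂ with h | h
    · exact Or.inl (fdiv_zero_of_bounds h (by omega))
    · exact Or.inr (fdiv_neg_one_of_bounds (by omega) h)
  have e1 : 0 ≤ h₁ → Int.fdiv h₁ p = 0 := fun h => fdiv_zero_of_bounds h (by omega)
  have e1' : h₁ < 0 → Int.fdiv h₁ p = -1 := fun h => fdiv_neg_one_of_bounds (by omega) h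
  have e2 : 0 ≤ h₂ → Int.fdiv h₂ q = 0 := fun h => fdiv_zero_of_bounds h (by omega)
  have e2' : h₂ < 0 → Int.fdiv h₂ q = -1 := fun h => fdiv_neg_one_of_bounds (by omega) h
  refine ⟨?_, ?_, ?_, ?_⟩
  · rintro ⟨a, b, c, d, e⟩
    rw [extDim, ← hh1, ← hh2, e1 a, e2 c]
    split <;> omega
  · rintro (⟨a, b, c, d, e⟩ | ⟨a, b, c, d, e⟩)
    · rw [extDim, ← hh1, ← hh2, e1' (by omega), e2 c]
      split <;> omega
    · rw [extDim, ← hh1, ← hh2, e1 a, e2' (by omega)]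
      split <;> omega
  · rintro ⟨a, b, c, d, e⟩
    rw [extDim, ← hh1, ← hh2, e1' (by omega), e2' (by omega)]
    split <;> omega
  · intro hn
    rw [extDim, ← hh1, ← hh2]
    rcases d1 with f1 | f1 <;> rcases d2 with f2 | f2 <;> rw [f1, f2] <;>
      split <;> first | rfl | (exfalso; apply hn; omega)
end

section
/- Let φ assign to each tilting bundle T (in normal form T = ⊕_{i=1}^{p+q} [D^{a_i}_{b_i}] with 0 = a₁ < a₂ ≤ ⋯ ≤ a_{p+q} = 1 and b₁ ≤ ⋯ ≤ b_{p+q}) the tuple (c₁,…,c_p) where qc_i/q is the lower endpoint of the unique triangle containing the upper boundary segment [(i−1)/p, i/p]. Then φ is a bijection between triangulations of the parallelogram in the universal cover whose arcs are all positive bridging arcs and the set Λ⁰_{(p,q)} = {(c₁,…,c_p) ∈ ℤ^p : c₁ ≤ ⋯ ≤ c_p ≤ c₁ + q}. -/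
/-- Quasi-periodic extension `ext(n) = c(n mod p) + q·⌊n/p⌋` of `c : Fin p → ℤ`. -/
def extSeq (p q : ℕ) (c : Fin p → ℤ) (n : ℤ) : ℤ :=
  (if h : (n.emod p).toNat < p then c ⟨(n.emod p).toNat, h⟩ else 0) + (q : ℤ) * n.ediv p

/-- The set of positive bridging arcs (a pair `(t,b)` is the arc from the bottom marked
point `b/q` to the top marked point `t/p` in the universal cover) of the triangulation
encoded by `c`: the top segment `[t/p, (t+1)/p]` lies in the triangle with bottom apex
`ext(t)/q`, so the top point `t/p` is joined to exactly the bottom points `b/q` with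
`ext(t−1) ≤ b ≤ ext(t)`. -/
def arcSet (p q : ℕ) (c : Fin p → ℤ) : Set (ℤ × ℤ) :=
  {x | extSeq p q c (x.1 - 1) ≤ x.2 ∧ x.2 ≤ extSeq p q c x.1}

/-- Periodicity under the deck transformation of the covering of the annulus. -/
def IsPeriodic (p q : ℕ) (S : Set (ℤ × ℤ)) : Prop :=
  ∀ t b : ℤ, (t, b) ∈ S ↔ (t + p, b + q) ∈ S

/-- Two positive bridging arcs do not cross iff their endpoints are not interlaced. -/
def Noncrossing (S : Set (ℤ × ℤ)) : Prop :=
  ∀ x ∈ S, ∀ y ∈ S, x.1 < y.1 → x.2 ≤ y.2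

/-- A triangulation of the (cover of the) annulus all of whose arcs are positive
bridging arcs: a maximal periodic pairwise-noncrossing set of bridging arcs. -/
def IsBridgingTriangulation (p q : ℕ) (S : Set (ℤ × ℤ)) : Prop :=
  IsPeriodic p q S ∧ Noncrossing S ∧
    ∀ T, S ⊆ T → IsPeriodic p q T → Noncrossing T → T = S

/-!
A triangulation `S` by positive bridging arcs is recorded by the function `e : ℤ → ℤ` sending a
top point `t` to the largest bottom endpoint of an arc at `t`. Noncrossing makes `e` monotone,
periodicity gives `e (t + p) = e t + q`, and maximality forces the arcs at `t` to be exactly those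
ending in `[e (t - 1), e t]`, because an arc crossing no arc of `S` already lies in `S`. A monotone
`e` with `e (t + p) = e t + q` is in turn the same as its restriction `(e 0, …, e (p - 1)) ∈ Λ⁰`,
whose quasi-periodic extension is `extSeq`.
-/

open Set

section QuasiPeriodic

variable {p q : ℕ}

lemma exists_eq_fin_add_mul (hp : 0 < p) (n : ℤ) : ∃ (r : Fin p) (k : ℤ), n = r + p * k := by
  have hp' : (0 : ℤ) < p := by exact_mod_cast hp
  have h0 := Int.emod_nonneg n hp'.ne'
  have h1 := Int.emod_lt_of_pos n hp'
  refine ⟨⟨(n % p).toNat, by omega⟩, n / p, ?_⟩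
  simp only [Int.toNat_of_nonneg h0]
  linarith [Int.mul_ediv_add_emod n p]

lemma extSeq_fin_add_mul (c : Fin p → ℤ) (r : Fin p) (k : ℤ) :
    extSeq p q c (r + p * k) = c r + q * k := by
  have hr : ((r : ℤ) + p * k) % p = r := by
    rw [Int.add_mul_emod_self_left]; exact Int.emod_eq_of_lt (by omega) (by omega)
  have hk : ((r : ℤ) + p * k) / p = k := by
    rw [Int.add_mul_ediv_left _ _ (by omega), Int.ediv_eq_zero_of_lt (by omega) (by omega),
      zero_add]
  change ((r : ℤ) + p * k).emod p = r at hr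
  change ((r : ℤ) + p * k).ediv p = k at hk
  simp [extSeq, hr, hk]

lemma extSeq_fin (c : Fin p → ℤ) (r : Fin p) : extSeq p q c r = c r := by
  simpa using extSeq_fin_add_mul (q := q) c r 0

lemma extSeq_add (hp : 0 < p) (c : Fin p → ℤ) (n : ℤ) :
    extSeq p q c (n + p) = extSeq p q c n + q := by
  obtain ⟨r, k, rfl⟩ := exists_eq_fin_add_mul hp n
  rw [show (r : ℤ) + p * k + p = r + p * (k + 1) by ring, extSeq_fin_add_mul, extSeq_fin_add_mul]
  ring

lemma monotone_extSeq (hp : 0 < p) {c : Fin p → ℤ} (hc : c ∈ Lam0 p q) :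
    Monotone (extSeq p q c) := by
  refine monotone_int_of_le_succ fun n => ?_
  obtain ⟨r, k, rfl⟩ := exists_eq_fin_add_mul hp n
  rw [extSeq_fin_add_mul]
  by_cases hr : (r : ℕ) + 1 < p
  · have := extSeq_fin_add_mul (q := q) c ⟨r + 1, hr⟩ k
    push_cast at this
    rw [add_right_comm, this]
    have := hc.1 r ⟨r + 1, hr⟩ (Fin.mk_le_mk.2 (by omega) : _)
    omega
  · have := extSeq_fin_add_mul (q := q) c ⟨0, hp⟩ (k + 1)
    push_cast at this
    have hr' : (r : ℤ) + 1 = p := by have := r.isLt; omega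
    rw [show (r : ℤ) + p * k + 1 = 0 + p * (k + 1) by rw [← hr']; ring, this]
    have := hc.2 r ⟨0, hp⟩
    linarith

lemma add_mul_of_add_eq {e : ℤ → ℤ} (he : ∀ n, e (n + p) = e n + q) (n k : ℤ) :
    e (n + p * k) = e n + q * k := by
  simpa [mul_comm] using AddConstMapClass.map_add_zsmul (AddConstMap.mk e he) n k

lemma extSeq_restrict (hp : 0 < p) {e : ℤ → ℤ} (he : ∀ n, e (n + p) = e n + q) :
    extSeq p q (fun r : Fin p => e r) = e := by
  funext n
  obtain ⟨r, k, rfl⟩ := exists_eq_fin_add_mul hp n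
  rw [extSeq_fin_add_mul, add_mul_of_add_eq he]

lemma restrict_mem_Lam0 {e : ℤ → ℤ} (hmono : Monotone e) (he : ∀ n, e (n + p) = e n + q) :
    (fun r : Fin p => e r) ∈ Lam0 p q := by
  refine ⟨fun i j hij => hmono (by exact_mod_cast hij), fun i j => ?_⟩
  rw [← he]
  exact hmono (by omega)

end QuasiPeriodic

def staircase (e : ℤ → ℤ) : Set (ℤ × ℤ) :=
  {x | e (x.1 - 1) ≤ x.2 ∧ x.2 ≤ e x.1}

section Staircase

variable {p q : ℕ} {e : ℤ → ℤ}

lemma arcSet_eq_staircase (c : Fin p → ℤ) : arcSet p q c = staircase (extSeq p q c) := rfl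

lemma isPeriodic_staircase (he : ∀ n, e (n + p) = e n + q) : IsPeriodic p q (staircase e) := by
  intro t b
  simp only [staircase, mem_ofPred_eq, he, show t + p - 1 = t - 1 + p by ring]
  omega

lemma noncrossing_staircase (hmono : Monotone e) : Noncrossing (staircase e) :=
  fun _ hx _ hy hlt => hx.2.trans <| (hmono (by omega)).trans hy.1

lemma isGreatest_staircase (hmono : Monotone e) (t : ℤ) :
    IsGreatest {b | (t, b) ∈ staircase e} (e t) :=
  ⟨⟨hmono (by omega), le_rfl⟩, fun _ hb => hb.2⟩

lemma isBridgingTriangulation_staircase (hmono : Monotone e) (he : ∀ n, e (n + p) = e n + q) :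
    IsBridgingTriangulation p q (staircase e) := by
  refine ⟨isPeriodic_staircase he, noncrossing_staircase hmono, fun T hsub _ hT => ?_⟩
  refine (Subset.antisymm ?_ hsub)
  rintro ⟨t, b⟩ htb
  have hleft : (t - 1, e (t - 1)) ∈ T := hsub (isGreatest_staircase hmono _).1
  have hright : (t + 1, e t) ∈ T := hsub ⟨by simp, hmono (by omega)⟩
  exact ⟨hT _ hleft _ htb (by simp), hT _ htb _ hright (by simp)⟩

lemma eq_of_staircase_eq {e' : ℤ → ℤ} (hmono : Monotone e) (hmono' : Monotone e')
    (h : staircase e = staircase e') : e = e' := by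
  funext t
  exact (isGreatest_staircase hmono t).unique (h ▸ isGreatest_staircase hmono' t)

end Staircase

section Triangulation

variable {p q : ℕ} {S : Set (ℤ × ℤ)}

lemma IsPeriodic.add_mul_mem_iff (hS : IsPeriodic p q S) (k t b : ℤ) :
    (t + p * k, b + q * k) ∈ S ↔ (t, b) ∈ S := by
  have hper : Function.Periodic (· ∈ S) ((p : ℤ), (q : ℤ)) := fun x => propext (hS x.1 x.2).symm
  simpa [mul_comm] using iff_of_eq (hper.zsmul k (t, b))

/-- Adding the orbit of the arc under the deck transformation keeps `S` periodic and
noncrossing. -/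
lemma IsBridgingTriangulation.mem_of_forall_noncrossing (hS : IsBridgingTriangulation p q S)
    {t b : ℤ} (hlt : ∀ x ∈ S, x.1 < t → x.2 ≤ b) (hgt : ∀ x ∈ S, t < x.1 → b ≤ x.2) :
    (t, b) ∈ S := by
  set O : Set (ℤ × ℤ) := range fun k : ℤ => (t + p * k, b + q * k)
  have hO : IsPeriodic p q O := by
    intro u v
    constructor
    · rintro ⟨k, hk⟩
      exact ⟨k + 1, by simp only [Prod.mk.injEq] at hk ⊢; constructor <;> linarith [hk.1, hk.2]⟩
    · rintro ⟨k, hk⟩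
      exact ⟨k - 1, by simp only [Prod.mk.injEq] at hk ⊢; constructor <;> linarith [hk.1, hk.2]⟩
  have hSO : IsPeriodic p q (S ∪ O) := fun u v => by
    simp only [mem_union, hS.1 u v, hO u v]
  have hnc : Noncrossing (S ∪ O) := by
    rintro x (hx | ⟨k, rfl⟩) y (hy | ⟨l, rfl⟩) hxy
    · exact hS.2.1 x hx y hy hxy
    · have := hlt _ ((hS.1.add_mul_mem_iff (-l) x.1 x.2).2 hx) (by dsimp only at hxy ⊢; linarith)
      dsimp only at this ⊢; linarith
    · have := hgt _ ((hS.1.add_mul_mem_iff (-k) y.1 y.2).2 hy) (by dsimp only at hxy ⊢; linarith)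
      dsimp only at this ⊢; linarith
    · have hkl : k < l := lt_of_mul_lt_mul_left (by simpa using hxy) (Int.natCast_nonneg p)
      simpa using mul_le_mul_of_nonneg_left hkl.le (Int.natCast_nonneg q)
  rw [← hS.2.2 _ subset_union_left hSO hnc]
  exact Or.inr ⟨0, by simp⟩

lemma IsBridgingTriangulation.nonempty (hS : IsBridgingTriangulation p q S) : S.Nonempty := by
  rcases S.eq_empty_or_nonempty with rfl | h
  · exact ⟨(0, 0), hS.mem_of_forall_noncrossing (by simp) (by simp)⟩
  · exact h

lemma IsBridgingTriangulation.exists_isGreatest_column (hp : 0 < p)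
    (hS : IsBridgingTriangulation p q S) (t : ℤ) : ∃ m, IsGreatest {b | (t, b) ∈ S} m := by
  obtain ⟨⟨t₀, b₀⟩, h₀⟩ := hS.nonempty
  have hp' : (1 : ℤ) ≤ p := by exact_mod_cast hp
  have hshift (k : ℤ) : (t₀ + p * k, b₀ + q * k) ∈ S := (hS.1.add_mul_mem_iff k t₀ b₀).2 h₀
  set L := {b | ∃ u ≤ t, (u, b) ∈ S}
  have hL : ∃ b, b ∈ L := by
    refine ⟨_, _, ?_, hshift (-|t - t₀|)⟩
    nlinarith [neg_abs_le (t - t₀), abs_nonneg (t - t₀)]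
  have hbdd : ∃ B, ∀ b ∈ L, b ≤ B := by
    refine ⟨_, fun b ⟨u, hu, hb⟩ => hS.2.1 (u, b) hb _ (hshift (|t - t₀| + 1)) ?_⟩
    nlinarith [le_abs_self (t - t₀), abs_nonneg (t - t₀)]
  obtain ⟨m, ⟨u, hu, hum⟩, hmax⟩ := Int.exists_greatest_of_bdd hbdd hL
  refine ⟨m, hS.mem_of_forall_noncrossing ?_ ?_, fun b hb => hmax b ⟨t, le_rfl, hb⟩⟩
  · exact fun x hx hxt => hmax _ ⟨x.1, hxt.le, hx⟩
  · exact fun x hx htx => hS.2.1 _ hum x hx (hu.trans_lt htx)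

variable {e : ℤ → ℤ}

lemma Noncrossing.monotone_of_isGreatest (hS : Noncrossing S)
    (he : ∀ t, IsGreatest {b | (t, b) ∈ S} (e t)) : Monotone e := by
  intro s t hst
  rcases hst.eq_or_lt with rfl | h
  · rfl
  · exact hS _ (he s).1 _ (he t).1 h

lemma IsPeriodic.add_eq_of_isGreatest (hS : IsPeriodic p q S)
    (he : ∀ t, IsGreatest {b | (t, b) ∈ S} (e t)) (t : ℤ) : e (t + p) = e t + q := by
  have h₁ : e t + q ≤ e (t + p) := (he (t + p)).2 ((hS t (e t)).1 (he t).1)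
  have h₂ : e (t + p) - q ≤ e t := (he t).2 ((hS t _).2 (by simpa using (he (t + p)).1))
  omega

lemma IsBridgingTriangulation.eq_staircase (hS : IsBridgingTriangulation p q S)
    (he : ∀ t, IsGreatest {b | (t, b) ∈ S} (e t)) : S = staircase e := by
  have hmono := hS.2.1.monotone_of_isGreatest he
  ext ⟨t, b⟩
  constructor
  · exact fun h => ⟨hS.2.1 _ (he (t - 1)).1 _ h (by simp), (he t).2 h⟩
  · rintro ⟨hlo, hhi⟩
    refine hS.mem_of_forall_noncrossing (fun x hx hxt => ?_) (fun x hx htx => ?_)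
    · exact ((he x.1).2 hx).trans ((hmono (by omega : x.1 ≤ t - 1)).trans hlo)
    · exact hhi.trans (hS.2.1 _ (he t).1 x hx htx)

lemma IsBridgingTriangulation.exists_eq_staircase (hp : 0 < p)
    (hS : IsBridgingTriangulation p q S) :
    ∃ e : ℤ → ℤ, Monotone e ∧ (∀ n, e (n + p) = e n + q) ∧ S = staircase e := by
  choose e he using hS.exists_isGreatest_column hp
  exact ⟨e, hS.2.1.monotone_of_isGreatest he, hS.1.add_eq_of_isGreatest he, hS.eq_staircase he⟩

end Triangulation

theorem bijection_tilting_tuples_general (p q : ℕ) (hp : 1 ≤ p) :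
    Set.BijOn (arcSet p q) (Lam0 p q) {S | IsBridgingTriangulation p q S} := by
  refine ⟨fun c hc => isBridgingTriangulation_staircase (monotone_extSeq hp hc) (extSeq_add hp c),
    fun c hc c' hc' h => ?_, fun S hS => ?_⟩
  · have := eq_of_staircase_eq (monotone_extSeq hp hc) (monotone_extSeq hp hc') h
    funext i
    simpa only [extSeq_fin] using congrFun this i
  · obtain ⟨e, hmono, he, rfl⟩ := hS.exists_eq_staircase hp
    exact ⟨_, restrict_mem_Lam0 hmono he, by rw [arcSet_eq_staircase, extSeq_restrict hp he]⟩

/-- `c ↦ arcSet c` (the inverse of reading off the apexes `cᵢ`) is a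
bijection between `Λ⁰_{(p,q)}` and the triangulations by positive bridging arcs. -/
theorem bijection_tilting_tuples (p q : ℕ) (hp : 1 ≤ p) (hq : 1 ≤ q) :
    Set.BijOn (arcSet p q) (Lam0 p q) {S | IsBridgingTriangulation p q S} :=
  bijection_tilting_tuples_general p q hp
end
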